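/- arXiv:1910.04809 — 2 statements merged into one kernel-verified Lean document; each statement's English description precedes it below -/
import Mathlib

section
/- Let γ : [a,b] → ℝ^n be a C^1 curve, and let W, V be sets with W compactly contained in the open set V, γ(a), γ(b) ∈ W, and the image of γ not contained in V. Then the total arc length of the portion of γ lying in V is at least 2·dist(W, ℝ^n ∖ V). -/
open Classical
open Set MeasureTheory

lemma seg_len {n : ℕ} (γ γ' : ℝ → EuclideanSpace ℝ (Fin n)) (s t : ℝ) (hst : s ≤ t)
    (hd : ∀ u ∈ Icc s t, HasDerivAt γ (γ' u) u) (hc : ContinuousOn γ' (Icc s t)) :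
    dist (γ s) (γ t) ≤ ∫ u in Icc s t, ‖γ' u‖ := by
  have hint : IntervalIntegrable γ' volume s t := hc.intervalIntegrable_of_Icc hst
  have hftc := intervalIntegral.integral_eq_sub_of_hasDerivAt
    (f := γ) (f' := γ') (by simpa [uIcc_of_le hst] using hd) hint
  have h1 : ‖γ t - γ s‖ ≤ ∫ u in s..t, ‖γ' u‖ := by
    rw [← hftc]; exact intervalIntegral.norm_integral_le_integral_norm hst
  rw [dist_eq_norm, norm_sub_rev]
  calc ‖γ t - γ s‖ ≤ ∫ u in s..t, ‖γ' u‖ := h1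
    _ = ∫ u in Ioc s t, ‖γ' u‖ := intervalIntegral.integral_of_le hst
    _ = ∫ u in Icc s t, ‖γ' u‖ := (integral_Icc_eq_integral_Ioc).symm

/-- if a C¹ curve starts and ends in `W ⋐ V` and leaves `V`, then the arc length
of its portion inside `V` is at least twice the distance from `W` to the complement of `V`. -/
theorem stmt_9 {n : ℕ} (V W : Set (EuclideanSpace ℝ (Fin n)))
    (hV : IsOpen V) (hW : closure W ⊆ V) (hWc : IsCompact (closure W))
    (a b : ℝ) (hab : a ≤ b)
    (γ : ℝ → EuclideanSpace ℝ (Fin n)) (γ' : ℝ → EuclideanSpace ℝ (Fin n))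
    (hγ : ∀ t ∈ Icc a b, HasDerivAt γ (γ' t) t) (hγ' : ContinuousOn γ' (Icc a b))
    (ha : γ a ∈ W) (hb : γ b ∈ W)
    (hout : ¬ γ '' Icc a b ⊆ V) :
    2 * sInf (Set.image2 dist W Vᶜ)
      ≤ ∫ t in Icc a b, (if γ t ∈ V then ‖γ' t‖ else 0) := by
  set f : ℝ → ℝ := fun t => if γ t ∈ V then ‖γ' t‖ else 0 with hf
  -- continuity of γ on Icc a b
  have hγc : ContinuousOn γ (Icc a b) := fun t ht => (hγ t ht).continuousAt.continuousWithinAt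
  -- the set of times outside V
  set K : Set ℝ := Icc a b ∩ γ ⁻¹' Vᶜ with hK
  have hKne : K.Nonempty := by
    rw [not_subset] at hout
    obtain ⟨y, hy, hyV⟩ := hout
    obtain ⟨t, ht, rfl⟩ := hy
    exact ⟨t, ht, hyV⟩
  have hKclosed : IsClosed K := hγc.preimage_isClosed_of_isClosed isClosed_Icc hV.isClosed_compl
  have hKcpt : IsCompact K := isCompact_Icc.of_isClosed_subset hKclosed inter_subset_left
  set t₀ : ℝ := sInf K with ht₀def
  set t₁ : ℝ := sSup K with ht₁def
  have ht₀K : t₀ ∈ K := hKcpt.sInf_mem hKne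
  have ht₁K : t₁ ∈ K := hKcpt.sSup_mem hKne
  have hat₀ : a ≤ t₀ := ht₀K.1.1
  have ht₁b : t₁ ≤ b := ht₁K.1.2
  have ht₀₁ : t₀ ≤ t₁ := csInf_le hKcpt.bddBelow ht₁K
  have ht₀b : t₀ ≤ b := ht₀₁.trans ht₁b
  have hat₁ : a ≤ t₁ := hat₀.trans ht₀₁
  -- before t₀ and after t₁ the curve is in V
  have hIco : ∀ t ∈ Ico a t₀, γ t ∈ V := by
    intro t ht
    by_contra h
    exact absurd (csInf_le hKcpt.bddBelow ⟨⟨ht.1, ht.2.le.trans ht₀b⟩, h⟩) (not_le.2 ht.2)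
  have hIoc : ∀ t ∈ Ioc t₁ b, γ t ∈ V := by
    intro t ht
    by_contra h
    exact absurd (le_csSup hKcpt.bddAbove ⟨⟨hat₁.trans ht.1.le, ht.2⟩, h⟩) (not_le.2 ht.1)
  -- distance bound
  set d : ℝ := sInf (Set.image2 dist W Vᶜ) with hd
  have hbdd : BddBelow (Set.image2 dist W Vᶜ) := by
    refine ⟨0, ?_⟩
    rintro x ⟨w, _, v, _, rfl⟩
    exact dist_nonneg
  have hd0 : d ≤ dist (γ a) (γ t₀) := csInf_le hbdd (mem_image2_of_mem ha ht₀K.2)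
  have hd1 : d ≤ dist (γ b) (γ t₁) := csInf_le hbdd (mem_image2_of_mem hb ht₁K.2)
  -- integrability of f on Icc a b
  have hnormInt : IntegrableOn (fun t => ‖γ' t‖) (Icc a b) := by
    exact (hγ'.norm).integrableOn_compact isCompact_Icc
  have hγae : AEMeasurable γ (volume.restrict (Icc a b)) :=
    (hγc.aemeasurable measurableSet_Icc)
  have hγ'ae : AEMeasurable (fun t => ‖γ' t‖) (volume.restrict (Icc a b)) :=
    (hγ'.norm.aemeasurable measurableSet_Icc)
  have hfeq : ∀ t, f t = Set.indicator V (fun _ => (1:ℝ)) (γ t) * ‖γ' t‖ := by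
    intro t
    by_cases h : γ t ∈ V <;> simp [hf, h]
  have hfmeas : AEMeasurable f (volume.restrict (Icc a b)) := by
    have h1 : Measurable (Set.indicator V (fun _ => (1:ℝ))) :=
      measurable_const.indicator hV.measurableSet
    have h2 : AEMeasurable (fun t => Set.indicator V (fun _ => (1:ℝ)) (γ t))
        (volume.restrict (Icc a b)) := h1.comp_aemeasurable hγae
    exact (h2.mul hγ'ae).congr (Filter.Eventually.of_forall fun t => (hfeq t).symm)
  have hfnonneg : ∀ t, 0 ≤ f t := by
    intro t; by_cases h : γ t ∈ V <;> simp [hf, h]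
  have hfle : ∀ t, ‖f t‖ ≤ ‖γ' t‖ := by
    intro t
    rw [Real.norm_of_nonneg (hfnonneg t)]
    by_cases h : γ t ∈ V <;> simp [hf, h]
  have hfInt : IntegrableOn f (Icc a b) :=
    Integrable.mono' hnormInt hfmeas.aestronglyMeasurable (Filter.Eventually.of_forall hfle)
  -- a.e. avoid t₀
  have hne₀ : ∀ᵐ t : ℝ, t ≠ t₀ := by
    rw [ae_iff]
    simpa using (Real.volume_singleton (x := t₀))
  have hne₁ : ∀ᵐ t : ℝ, t ≠ t₁ := by
    rw [ae_iff]
    simpa using (Real.volume_singleton (x := t₁))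
  -- piece 1: ∫ over Icc a t₀ of f equals ∫ of ‖γ'‖
  have hpiece₀ : ∫ t in Icc a t₀, f t = ∫ t in Icc a t₀, ‖γ' t‖ := by
    refine setIntegral_congr_ae measurableSet_Icc ?_
    filter_upwards [hne₀] with t htne htmem
    have : γ t ∈ V := hIco t ⟨htmem.1, lt_of_le_of_ne htmem.2 htne⟩
    simp [hf, this]
  have hpiece₁ : ∫ t in Icc t₁ b, f t = ∫ t in Icc t₁ b, ‖γ' t‖ := by
    refine setIntegral_congr_ae measurableSet_Icc ?_
    filter_upwards [hne₁] with t htne htmem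
    have : γ t ∈ V := hIoc t ⟨lt_of_le_of_ne htmem.1 (Ne.symm htne), htmem.2⟩
    simp [hf, this]
  -- lower bounds
  have hseg₀ : d ≤ ∫ t in Icc a t₀, f t := by
    rw [hpiece₀]
    exact hd0.trans (seg_len γ γ' a t₀ hat₀
      (fun u hu => hγ u ⟨hu.1, hu.2.trans ht₀b⟩)
      (hγ'.mono (Icc_subset_Icc le_rfl ht₀b)))
  have hseg₁ : d ≤ ∫ t in Icc t₁ b, f t := by
    rw [hpiece₁]
    have := seg_len γ γ' t₁ b ht₁b
      (fun u hu => hγ u ⟨hat₁.trans hu.1, hu.2⟩)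
      (hγ'.mono (Icc_subset_Icc hat₁ le_rfl))
    rw [dist_comm] at this; exact hd1.trans this
  -- splitting the integral
  have hsplit : ∫ t in Icc a b, f t = (∫ t in Icc a t₀, f t) + ∫ t in Ioc t₀ b, f t := by
    rw [← setIntegral_union (((Iic_disjoint_Ioc (le_refl t₀)).mono Icc_subset_Iic_self le_rfl)) measurableSet_Ioc
      (hfInt.mono_set (Icc_subset_Icc le_rfl ht₀b))
      (hfInt.mono_set (Ioc_subset_Icc_self.trans (Icc_subset_Icc hat₀ le_rfl))),
      Icc_union_Ioc_eq_Icc hat₀ ht₀b]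
  have hmono : ∫ t in Icc t₁ b, f t ≤ ∫ t in Ioc t₀ b, f t := by
    refine setIntegral_mono_set
      (hfInt.mono_set (Ioc_subset_Icc_self.trans (Icc_subset_Icc hat₀ le_rfl)))
      (Filter.Eventually.of_forall hfnonneg) ?_
    filter_upwards [hne₀] with t htne htmem
    exact ⟨lt_of_le_of_ne (ht₀₁.trans htmem.1) (Ne.symm htne), htmem.2⟩
  calc 2 * d = d + d := by ring
    _ ≤ (∫ t in Icc a t₀, f t) + ∫ t in Icc t₁ b, f t := add_le_add hseg₀ hseg₁
    _ ≤ (∫ t in Icc a t₀, f t) + ∫ t in Ioc t₀ b, f t := by linarith [hmono]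
    _ = ∫ t in Icc a b, f t := hsplit.symm
end

section
/- Let U be an open subset of Ω and suppose no integral curve of the vector field X connects any point of U to ∂Ω (i.e., Σ_U ∩ ∂Ω = ∅, where Σ_U is the union of all integral curves of X meeting U). Then Σ_U ⊆ Ω and Σ_U is invariant under the flow of X for all time; i.e., every maximal integral curve starting in Σ_U stays in Σ_U and is defined for all t ∈ ℝ. -/
open Set
open scoped NNReal

noncomputable def myEps (K : ℝ≥0) : ℝ := (2 * ((K : ℝ) + 1))⁻¹

theorem myEps_pos (K : ℝ≥0) : 0 < myEps K := by
  have : (0:ℝ) < 2 * ((K:ℝ) + 1) := by positivity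
  exact inv_pos.mpr this

theorem my_local {E : Type*} [NormedAddCommGroup E] [NormedSpace ℝ E] [CompleteSpace E]
    {v : E → E} {K : ℝ≥0} (hv : LipschitzWith K v) (t₀ : ℝ) (x₀ : E) :
    ∃ f : ℝ → E, f t₀ = x₀ ∧ ∀ t ∈ Icc (t₀ - myEps K) (t₀ + myEps K),
      HasDerivWithinAt f (v (f t)) (Icc (t₀ - myEps K) (t₀ + myEps K)) t := by
  set ε := myEps K with hε
  have hε0 : 0 < ε := myEps_pos K
  let t0 : Icc (t₀ - ε) (t₀ + ε) := ⟨t₀, by constructor <;> linarith⟩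
  set R : ℝ≥0 := ⟨2 * ε * ‖v x₀‖, by positivity⟩ with hR
  set C : ℝ≥0 := ⟨‖v x₀‖ + K * (R : ℝ), by positivity⟩ with hC
  have hRv : (R : ℝ) = 2 * ε * ‖v x₀‖ := rfl
  have hCv : (C : ℝ) = ‖v x₀‖ + K * (R : ℝ) := rfl
  have hpl : IsPicardLindelof (fun _ => v) t0 x₀ R 0 C K := by
    apply IsPicardLindelof.of_time_independent _ hv.lipschitzOnWith
    · have hmax : max (t₀ + ε - t₀) (t₀ - (t₀ - ε)) = ε := by
        simp
      have hKε : (K:ℝ) * ε ≤ 1/2 := by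
        rw [hε, myEps]
        rw [mul_inv_le_iff₀ (by positivity)]
        have hK0 : (0:ℝ) ≤ K := K.coe_nonneg
        nlinarith
      have hn : (0:ℝ) ≤ ‖v x₀‖ := norm_nonneg _
      have hR0 : (0:ℝ) ≤ R := R.coe_nonneg
      show (C:ℝ) * max (t₀ + ε - t₀) (t₀ - (t₀ - ε)) ≤ (R : ℝ) - ((0 : ℝ≥0) : ℝ)
      rw [hmax, NNReal.coe_zero, sub_zero, hCv]
      calc (‖v x₀‖ + K * (R:ℝ)) * ε = ‖v x₀‖ * ε + (K * ε) * R := by ring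
        _ ≤ ‖v x₀‖ * ε + (1/2) * R := by nlinarith
        _ ≤ R := by rw [hRv]; nlinarith
    · intro x hx
      have h1 : dist (v x) (v x₀) ≤ K * dist x x₀ := hv.dist_le_mul x x₀
      have h2 : dist x x₀ ≤ R := Metric.mem_closedBall.mp hx
      have h3 : ‖v x‖ ≤ ‖v x₀‖ + dist (v x) (v x₀) := by
        rw [dist_eq_norm]
        have := norm_add_le (v x₀) (v x - v x₀)
        simpa using this
      have hK0 : (0:ℝ) ≤ K := K.coe_nonneg
      rw [hCv]
      nlinarith
  obtain ⟨f, hf0, hf⟩ := hpl.exists_eq_forall_mem_Icc_hasDerivWithinAt₀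
  exact ⟨f, hf0, hf⟩

/-- Uniqueness: two solutions with full derivatives on `Icc a b` agreeing at some point agree. -/
theorem my_uniq {E : Type*} [NormedAddCommGroup E] [NormedSpace ℝ E]
    {v : E → E} {K : ℝ≥0} (hv : LipschitzWith K v) {f g : ℝ → E} {a b t₀ : ℝ}
    (ht₀ : t₀ ∈ Icc a b)
    (hf : ∀ t ∈ Icc a b, HasDerivAt f (v (f t)) t)
    (hg : ∀ t ∈ Icc a b, HasDerivAt g (v (g t)) t)
    (heq : f t₀ = g t₀) : EqOn f g (Icc a b) := by
  have hv' : ∀ t : ℝ, LipschitzOnWith K ((fun _ : ℝ => v) t) ((fun _ : ℝ => (univ : Set E)) t) :=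
    fun _ => hv.lipschitzOnWith.mono (subset_univ _)
  intro t ht
  rcases le_total t t₀ with h | h
  · -- backward on Icc a t₀
    have key : EqOn f g (Icc a t₀) := by
      apply ODE_solution_unique_of_mem_Icc_left (a := a) (b := t₀) (fun t _ => hv' t)
        (fun s hs => ((hf s ⟨hs.1, hs.2.trans ht₀.2⟩).continuousAt).continuousWithinAt)
        (fun s hs => (hf s ⟨hs.1.le, hs.2.trans ht₀.2⟩).hasDerivWithinAt)
        (fun _ _ => mem_univ _)
        (fun s hs => ((hg s ⟨hs.1, hs.2.trans ht₀.2⟩).continuousAt).continuousWithinAt)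
        (fun s hs => (hg s ⟨hs.1.le, hs.2.trans ht₀.2⟩).hasDerivWithinAt)
        (fun _ _ => mem_univ _) heq
    exact key ⟨ht.1, h⟩
  · have key : EqOn f g (Icc t₀ b) := by
      apply ODE_solution_unique_of_mem_Icc_right (a := t₀) (b := b) (fun t _ => hv' t)
        (fun s hs => ((hf s ⟨ht₀.1.trans hs.1, hs.2⟩).continuousAt).continuousWithinAt)
        (fun s hs => (hf s ⟨ht₀.1.trans hs.1, hs.2.le⟩).hasDerivWithinAt)
        (fun _ _ => mem_univ _)
        (fun s hs => ((hg s ⟨ht₀.1.trans hs.1, hs.2⟩).continuousAt).continuousWithinAt)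
        (fun s hs => (hg s ⟨ht₀.1.trans hs.1, hs.2.le⟩).hasDerivWithinAt)
        (fun _ _ => mem_univ _) heq
    exact key ⟨h, ht.2⟩

theorem my_step {E : Type*} [NormedAddCommGroup E] [NormedSpace ℝ E] [CompleteSpace E]
    {v : E → E} {K : ℝ≥0} (hv : LipschitzWith K v) {a : ℝ} (ha : myEps K ≤ a)
    {f : ℝ → E} (hf : ∀ t ∈ Icc (-a) a, HasDerivWithinAt f (v (f t)) (Icc (-a) a) t) :
    ∃ g : ℝ → E, EqOn g f (Icc (-a) a) ∧ ∀ t ∈ Icc (-(a + myEps K)) (a + myEps K),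
      HasDerivWithinAt g (v (g t)) (Icc (-(a + myEps K)) (a + myEps K)) t := by
  set ε := myEps K with hεdef
  have hε0 : 0 < ε := myEps_pos K
  have ha0 : 0 < a := lt_of_lt_of_le hε0 ha
  obtain ⟨p, hp0, hp⟩ := my_local hv a (f a)
  obtain ⟨q, hq0, hq⟩ := my_local hv (-a) (f (-a))
  have hv' : ∀ t : ℝ, LipschitzOnWith K ((fun _ : ℝ => v) t) ((fun _ : ℝ => (univ : Set E)) t) :=
    fun _ => hv.lipschitzOnWith.mono (subset_univ _)
  -- f = p on Icc (a-ε) a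
  have hfp : EqOn f p (Icc (a - ε) a) := by
    apply ODE_solution_unique_of_mem_Icc_left (a := a - ε) (b := a) (fun t _ => hv' t)
    · exact fun s hs => ((hf s ⟨by linarith [hs.1], hs.2⟩).continuousWithinAt).mono
        (Icc_subset_Icc (by linarith) le_rfl)
    · intro s hs
      refine (hf s ⟨by linarith [hs.1], hs.2⟩).mono_of_mem_nhdsWithin ?_
      refine mem_nhdsWithin.mpr ⟨Ioi (-a), isOpen_Ioi, by simp; linarith [hs.1], ?_⟩
      rintro y ⟨hy1, hy2⟩
      exact ⟨le_of_lt hy1, le_trans hy2 hs.2⟩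
    · exact fun _ _ => mem_univ _
    · exact fun s hs => ((hp s ⟨hs.1, by linarith [hs.2]⟩).continuousWithinAt).mono
        (Icc_subset_Icc le_rfl (by linarith))
    · intro s hs
      refine (hp s ⟨hs.1.le, by linarith [hs.2]⟩).mono_of_mem_nhdsWithin ?_
      refine mem_nhdsWithin.mpr ⟨Ioi (a - ε), isOpen_Ioi, hs.1, ?_⟩
      rintro y ⟨hy1, hy2⟩
      exact ⟨le_of_lt hy1, by linarith [mem_Iic.mp hy2, hs.2]⟩
    · exact fun _ _ => mem_univ _
    · exact hp0.symm
  -- f = q on Icc (-a) (-a+ε)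
  have hfq : EqOn f q (Icc (-a) (-a + ε)) := by
    apply ODE_solution_unique_of_mem_Icc_right (a := -a) (b := -a + ε) (fun t _ => hv' t)
    · exact fun s hs => ((hf s ⟨hs.1, by linarith [hs.2]⟩).continuousWithinAt).mono
        (Icc_subset_Icc le_rfl (by linarith))
    · intro s hs
      refine (hf s ⟨hs.1, by linarith [hs.2]⟩).mono_of_mem_nhdsWithin ?_
      refine mem_nhdsWithin.mpr ⟨Iio a, isOpen_Iio, by simp; linarith [hs.2], ?_⟩
      rintro y ⟨hy1, hy2⟩
      exact ⟨le_trans hs.1 hy2, le_of_lt hy1⟩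
    · exact fun _ _ => mem_univ _
    · exact fun s hs => ((hq s ⟨by linarith [hs.1], by linarith [hs.2]⟩).continuousWithinAt).mono
        (Icc_subset_Icc (by linarith) (by linarith))
    · intro s hs
      refine (hq s ⟨by linarith [hs.1], by linarith [hs.2]⟩).mono_of_mem_nhdsWithin ?_
      refine mem_nhdsWithin.mpr ⟨Iio (-a + ε), isOpen_Iio, hs.2, ?_⟩
      rintro y ⟨hy1, hy2⟩
      exact ⟨by linarith [hs.1, mem_Ici.mp hy2], le_of_lt hy1⟩
    · exact fun _ _ => mem_univ _
    · exact hq0.symm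
  classical
  set g : ℝ → E := fun t => if t < -a then q t else if t ≤ a then f t else p t with hgdef
  have hgf : EqOn g f (Icc (-a) a) := by
    intro t ht
    simp only [hgdef]
    rw [if_neg (not_lt.mpr ht.1), if_pos ht.2]
  have hgq : EqOn g q (Icc (-a - ε) (-a + ε)) := by
    intro t ht
    simp only [hgdef]
    by_cases h1 : t < -a
    · rw [if_pos h1]
    · rw [if_neg h1, if_pos (by linarith [ht.2, ha] : t ≤ a)]
      exact hfq ⟨not_lt.mp h1, ht.2⟩
  have hgp : EqOn g p (Icc (a - ε) (a + ε)) := by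
    intro t ht
    simp only [hgdef]
    rw [if_neg (not_lt.mpr (by linarith [ht.1, ha] : -a ≤ t))]
    by_cases h2 : t ≤ a
    · rw [if_pos h2]; exact hfp ⟨ht.1, h2⟩
    · rw [if_neg h2]
  refine ⟨g, hgf, ?_⟩
  intro t ht
  rcases lt_or_ge t (-a + ε) with h1 | h1
  · -- use q
    have htq : t ∈ Icc (-a - ε) (-a + ε) := ⟨by linarith [ht.1], h1.le⟩
    have h := (hq t htq).congr (fun y hy => hgq hy) (hgq htq)
    rw [← hgq htq] at h
    refine h.mono_of_mem_nhdsWithin (mem_nhdsWithin.mpr ⟨Iio (-a + ε), isOpen_Iio, h1, ?_⟩)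
    rintro y ⟨hy1, hy2⟩
    exact ⟨by linarith [hy2.1], le_of_lt hy1⟩
  rcases lt_or_ge (a - ε) t with h2 | h2
  · -- use p
    have htp : t ∈ Icc (a - ε) (a + ε) := ⟨h2.le, by linarith [ht.2]⟩
    have h := (hp t htp).congr (fun y hy => hgp hy) (hgp htp)
    rw [← hgp htp] at h
    refine h.mono_of_mem_nhdsWithin (mem_nhdsWithin.mpr ⟨Ioi (a - ε), isOpen_Ioi, h2, ?_⟩)
    rintro y ⟨hy1, hy2⟩
    exact ⟨le_of_lt hy1, by linarith [hy2.2]⟩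
  · -- use f
    have htf : t ∈ Icc (-a) a := ⟨by linarith, by linarith⟩
    have h := (hf t htf).congr (fun y hy => hgf hy) (hgf htf)
    rw [← hgf htf] at h
    refine h.mono_of_mem_nhdsWithin (mem_nhdsWithin.mpr ⟨Ioo (-a) a, isOpen_Ioo, ⟨by linarith, by linarith⟩, ?_⟩)
    rintro y ⟨hy1, hy2⟩
    exact ⟨hy1.1.le, hy1.2.le⟩

theorem my_global {E : Type*} [NormedAddCommGroup E] [NormedSpace ℝ E] [CompleteSpace E]
    {v : E → E} {K : ℝ≥0} (hv : LipschitzWith K v) (x₀ : E) :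
    ∃ γ : ℝ → E, γ 0 = x₀ ∧ ∀ t : ℝ, HasDerivAt γ (v (γ t)) t := by
  set ε := myEps K with hεdef
  have hε0 : 0 < ε := myEps_pos K
  have main : ∀ N : ℕ, ∃ f : ℝ → E, f 0 = x₀ ∧ ∀ t ∈ Icc (-(((N : ℝ) + 1) * ε)) (((N : ℝ) + 1) * ε),
      HasDerivWithinAt f (v (f t)) (Icc (-(((N : ℝ) + 1) * ε)) (((N : ℝ) + 1) * ε)) t := by
    intro N
    induction N with
    | zero =>
      obtain ⟨f, hf0, hf⟩ := my_local hv 0 x₀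
      refine ⟨f, hf0, ?_⟩
      rw [show -((((0:ℕ):ℝ) + 1) * ε) = 0 - ε by norm_num,
        show ((((0:ℕ):ℝ) + 1) * ε) = 0 + ε by norm_num]
      exact hf
    | succ N ih =>
      obtain ⟨f, hf0, hf⟩ := ih
      have haε : ε ≤ ((N : ℝ) + 1) * ε :=
        le_mul_of_one_le_left hε0.le (by linarith [Nat.cast_nonneg (α := ℝ) N])
      obtain ⟨g, hgf, hg⟩ := my_step hv haε hf
      have ha0 : (0:ℝ) < ((N : ℝ) + 1) * ε := lt_of_lt_of_le hε0 haε
      refine ⟨g, ?_, ?_⟩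
      · rw [hgf ⟨by linarith, by linarith⟩]; exact hf0
      · rw [show -((((N+1:ℕ):ℝ) + 1) * ε) = -(((N:ℝ) + 1) * ε + ε) by push_cast; ring,
          show ((((N+1:ℕ):ℝ) + 1) * ε) = ((N:ℝ) + 1) * ε + ε by push_cast; ring]
        exact hg
  choose F hF0 hF using main
  -- solutions agree on common domains
  have hagree : ∀ (M N : ℕ) (t : ℝ), |t| < ((M : ℝ) + 1) * ε → |t| < ((N : ℝ) + 1) * ε →
      F M t = F N t := by
    intro M N t hM hN
    set m : ℝ := min (((M : ℝ) + 1) * ε) (((N : ℝ) + 1) * ε) with hm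
    have hm0 : 0 < m := lt_min (by positivity) (by positivity)
    have hderiv : ∀ (P : ℕ), m ≤ ((P : ℝ) + 1) * ε → ∀ s ∈ Ioo (-m) m,
        HasDerivAt (F P) (v (F P s)) s := by
      intro P hP s hs
      refine (hF P s ⟨by linarith [hs.1], by linarith [hs.2]⟩).hasDerivAt
        (Icc_mem_nhds (by linarith [hs.1]) (by linarith [hs.2]))
    have key : EqOn (F M) (F N) (Icc (-m) m) := by
      have h0 : (0:ℝ) ∈ Ioo (-m) m := ⟨by linarith, hm0⟩
      apply ODE_solution_unique_of_mem_Icc (v := fun _ => v) (s := fun _ => (univ : Set E))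
        (fun _ _ => hv.lipschitzOnWith.mono (subset_univ _)) h0
      · intro s hs
        exact ((hF M s ⟨by linarith [hs.1, min_le_left (((M : ℝ) + 1) * ε) (((N : ℝ) + 1) * ε)],
          by linarith [hs.2, min_le_left (((M : ℝ) + 1) * ε) (((N : ℝ) + 1) * ε)]⟩).continuousWithinAt).mono
          (Icc_subset_Icc (by linarith [min_le_left (((M : ℝ) + 1) * ε) (((N : ℝ) + 1) * ε)])
            (min_le_left _ _))
      · exact hderiv M (min_le_left _ _)
      · exact fun _ _ => mem_univ _
      · intro s hs
        exact ((hF N s ⟨by linarith [hs.1, min_le_right (((M : ℝ) + 1) * ε) (((N : ℝ) + 1) * ε)],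
          by linarith [hs.2, min_le_right (((M : ℝ) + 1) * ε) (((N : ℝ) + 1) * ε)]⟩).continuousWithinAt).mono
          (Icc_subset_Icc (by linarith [min_le_right (((M : ℝ) + 1) * ε) (((N : ℝ) + 1) * ε)])
            (min_le_right _ _))
      · exact hderiv N (min_le_right _ _)
      · exact fun _ _ => mem_univ _
      · rw [hF0 M, hF0 N]
    have htm : |t| ≤ m := le_min hM.le hN.le
    exact key ⟨neg_le_of_abs_le htm, le_of_abs_le htm⟩
  set Nt : ℝ → ℕ := fun t => ⌈|t| / ε⌉₊ with hNtdef
  have hNtlt : ∀ t : ℝ, |t| + ε ≤ ((Nt t : ℝ) + 1) * ε := by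
    intro t
    have h1 : |t| / ε ≤ (Nt t : ℝ) := Nat.le_ceil _
    have h2 : |t| ≤ (Nt t : ℝ) * ε := (div_le_iff₀ hε0).mp h1
    rw [add_mul, one_mul]
    linarith
  refine ⟨fun t => F (Nt t) t, hF0 _, ?_⟩
  intro t
  have hlt : |t| < ((Nt t : ℝ) + 1) * ε := lt_of_lt_of_le (by linarith) (hNtlt t)
  have hev : (fun s => F (Nt s) s) =ᶠ[nhds t] F (Nt t) := by
    filter_upwards [Metric.ball_mem_nhds t hε0] with s hs
    have hst : |s - t| < ε := by rwa [Metric.mem_ball, Real.dist_eq] at hs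
    have hslt : |s| < ((Nt t : ℝ) + 1) * ε := by
      have h3 := abs_sub_abs_le_abs_sub s t
      linarith [hNtlt t]
    exact hagree (Nt s) (Nt t) s (lt_of_lt_of_le (by linarith) (hNtlt s)) hslt
  have habs := abs_lt.mp hlt
  have hd : HasDerivAt (F (Nt t)) (v (F (Nt t) t)) t :=
    (hF (Nt t) t ⟨habs.1.le, habs.2.le⟩).hasDerivAt (Icc_mem_nhds habs.1 habs.2)
  exact hd.congr_of_eventuallyEq hev

theorem stay_aux {E : Type*} [TopologicalSpace E] {γ : ℝ → E} (hγ : Continuous γ)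
    {C O : Set E} (hC : IsClosed C) (hO : IsOpen O) (hOC : O ⊆ C) (h0 : γ 0 ∈ C)
    (key : ∀ t : ℝ, 0 ≤ t → (∀ s ∈ Icc 0 t, γ s ∈ C) → γ t ∈ O) :
    ∀ t : ℝ, 0 ≤ t → ∀ s ∈ Icc 0 t, γ s ∈ C := by
  intro t ht
  set S : Set ℝ := {r ∈ Icc 0 t | ∀ s ∈ Icc 0 r, γ s ∈ C} with hSdef
  have h0S : (0:ℝ) ∈ S := by
    refine ⟨⟨le_rfl, ht⟩, fun s hs => ?_⟩
    have : s = 0 := le_antisymm hs.2 hs.1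
    rwa [this]
  have hne : S.Nonempty := ⟨0, h0S⟩
  have hbdd : BddAbove S := ⟨t, fun r hr => hr.1.2⟩
  set T := sSup S with hTdef
  have hT0 : 0 ≤ T := le_csSup hbdd h0S
  have hTt : T ≤ t := csSup_le hne fun r hr => hr.1.2
  have hlt : ∀ s : ℝ, 0 ≤ s → s < T → γ s ∈ C := by
    intro s hs0 hsT
    obtain ⟨r, hrS, hsr⟩ := exists_lt_of_lt_csSup hne hsT
    exact hrS.2 s ⟨hs0, hsr.le⟩
  have hTC : ∀ s ∈ Icc (0:ℝ) T, γ s ∈ C := by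
    intro s hs
    rcases lt_or_eq_of_le hs.2 with h | h
    · exact hlt s hs.1 h
    · subst h
      rcases eq_or_lt_of_le hT0 with h0T | h0T
      · rw [← h0T]; exact h0
      · have htend : Filter.Tendsto γ (nhdsWithin T (Iio T)) (nhds (γ T)) :=
          (hγ.continuousAt.tendsto).mono_left nhdsWithin_le_nhds
        refine hC.mem_of_tendsto htend ?_
        have hmem : Ico (0:ℝ) T ∈ nhdsWithin T (Iio T) := by
          refine mem_nhdsWithin.mpr ⟨Ioi 0, isOpen_Ioi, h0T, ?_⟩
          rintro y ⟨hy1, hy2⟩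
          exact ⟨le_of_lt hy1, hy2⟩
        filter_upwards [hmem] with y hy
        exact hlt y hy.1 hy.2
  have hTS : T ∈ S := ⟨⟨hT0, hTt⟩, hTC⟩
  have hTeq : T = t := by
    by_contra hne'
    have hTlt : T < t := lt_of_le_of_ne hTt hne'
    have hTO : γ T ∈ O := key T hT0 hTC
    have hnhds : γ ⁻¹' O ∈ nhds T := (hO.preimage hγ).mem_nhds hTO
    obtain ⟨δ, hδ0, hball⟩ := Metric.mem_nhds_iff.mp hnhds
    set T' := min t (T + δ / 2) with hT'def
    have hTT' : T < T' := lt_min hTlt (by linarith)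
    have hT'S : T' ∈ S := by
      refine ⟨⟨hT0.trans hTT'.le, min_le_left _ _⟩, fun s hs => ?_⟩
      rcases le_or_gt s T with h | h
      · exact hTC s ⟨hs.1, h⟩
      · refine hOC (hball ?_)
        rw [Metric.mem_ball, Real.dist_eq, abs_sub_lt_iff]
        constructor
        · have : s ≤ T + δ / 2 := hs.2.trans (min_le_right _ _)
          linarith
        · linarith
    have := le_csSup hbdd hT'S
    linarith
  intro s hs
  exact hTC s ⟨hs.1, hs.2.trans hTeq.ge⟩


/-- `relOf F K x y`: some integral curve of the vector field `F`, staying in `K`, contains both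
`x` and `y` in its image. -/
def relOf {n : ℕ} (F : EuclideanSpace ℝ (Fin n) → EuclideanSpace ℝ (Fin n))
    (K : Set (EuclideanSpace ℝ (Fin n))) (x y : EuclideanSpace ℝ (Fin n)) : Prop :=
  ∃ (b : ℝ) (γ : ℝ → EuclideanSpace ℝ (Fin n)), 0 ≤ b ∧
    (∀ t ∈ Icc (0:ℝ) b, γ t ∈ K ∧ HasDerivAt γ (F (γ t)) t) ∧
    x ∈ γ '' Icc (0:ℝ) b ∧ y ∈ γ '' Icc (0:ℝ) b

/-- The union of integral curves of `F` (staying in `K`) meeting `A`. -/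
def SigmaOf {n : ℕ} (F : EuclideanSpace ℝ (Fin n) → EuclideanSpace ℝ (Fin n))
    (K A : Set (EuclideanSpace ℝ (Fin n))) : Set (EuclideanSpace ℝ (Fin n)) :=
  {y | ∃ x ∈ A, relOf F K y x}

/-- if no integral curve of `X` joins `U` to `∂Ω`, then `Σ_U ⊆ Ω` and `Σ_U` is
invariant under the flow of `X` for all time: through each point of `Σ_U` there is a global
integral curve staying in `Σ_U`. -/
theorem stmt_13 {n : ℕ} (Ω : Set (EuclideanSpace ℝ (Fin n)))
    (hΩ : IsOpen Ω) (hΩb : Bornology.IsBounded Ω)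
    (X : EuclideanSpace ℝ (Fin n) → EuclideanSpace ℝ (Fin n))
    (hX : ∃ L, LipschitzOnWith L X (closure Ω))
    (U : Set (EuclideanSpace ℝ (Fin n))) (hU : IsOpen U) (hUΩ : U ⊆ Ω)
    (hdisj : SigmaOf X (closure Ω) U ∩ frontier Ω = ∅) :
    SigmaOf X (closure Ω) U ⊆ Ω ∧
    ∀ x ∈ SigmaOf X (closure Ω) U, ∃ γ : ℝ → EuclideanSpace ℝ (Fin n),
      γ 0 = x ∧ ∀ t : ℝ, γ t ∈ SigmaOf X (closure Ω) U ∧ HasDerivAt γ (X (γ t)) t := by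
  obtain ⟨L, hL⟩ := hX
  obtain ⟨Y, hYlip, hXY⟩ := hL.extend_finite_dimension
  have hSsub : SigmaOf X (closure Ω) U ⊆ closure Ω := by
    rintro y ⟨u, hu, b, σ, hb, hσ, ⟨s, hs, rfl⟩, -⟩
    exact (hσ s hs).1
  have hSOm : SigmaOf X (closure Ω) U ⊆ Ω := by
    intro y hy
    by_contra hyΩ
    have hfr : y ∈ frontier Ω := by
      rw [frontier, mem_diff, hΩ.interior_eq]
      exact ⟨hSsub hy, hyΩ⟩
    have : y ∈ SigmaOf X (closure Ω) U ∩ frontier Ω := ⟨hy, hfr⟩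
    rw [hdisj] at this
    exact this
  refine ⟨hSOm, ?_⟩
  intro x hx
  obtain ⟨γ, hγ0, hγ⟩ := my_global hYlip x
  have hx' := hx
  obtain ⟨u, hu, b, σ, hb, hσ, hxim, huim⟩ := hx'
  obtain ⟨s₁, hs₁, hσ₁⟩ := hxim
  obtain ⟨s₂, hs₂, hσ₂⟩ := huim
  have hσY : ∀ t ∈ Icc (0:ℝ) b, HasDerivAt σ (Y (σ t)) t := by
    intro t htt
    have h := (hσ t htt).2
    rwa [hXY (hσ t htt).1] at h
  have hshift : ∀ (c s : ℝ), HasDerivAt (fun τ => γ (τ + c)) (Y (γ (s + c))) s := by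
    intro c s
    exact HasDerivAt.comp_add_const s c (hγ (s + c))
  have hEqσ : EqOn σ (fun τ => γ (τ + -s₁)) (Icc 0 b) := by
    refine my_uniq hYlip (t₀ := s₁) hs₁ hσY (fun t _ => hshift (-s₁) t) ?_
    simp [hσ₁, hγ0]
  have hγcl : ∀ s ∈ Icc (-s₁) (b - s₁), γ s ∈ closure Ω := by
    intro s hs
    have hmem : s + s₁ ∈ Icc (0:ℝ) b := ⟨by linarith [hs.1], by linarith [hs.2]⟩
    have h := (hσ (s + s₁) hmem).1
    rw [hEqσ hmem] at h
    simpa using h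
  have hs₁0 : 0 ≤ s₁ := hs₁.1
  have hs₁b : s₁ ≤ b := hs₁.2
  have hmem : ∀ t : ℝ, (∀ s ∈ uIcc 0 t, γ s ∈ closure Ω) → γ t ∈ SigmaOf X (closure Ω) U := by
    intro t hcl
    set m : ℝ := min (-s₁) (min 0 t) with hm
    set M : ℝ := max (b - s₁) (max 0 t) with hM
    have hm0 : m ≤ 0 := le_trans (min_le_right _ _) (min_le_left _ _)
    have h0M : 0 ≤ M := le_trans (le_max_left 0 t) (le_max_right _ _)
    have hcl' : ∀ s ∈ Icc m M, γ s ∈ closure Ω := by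
      intro s hs
      rcases le_or_gt (-s₁) s with h1 | h1
      · rcases le_or_gt s (b - s₁) with h2 | h2
        · exact hγcl s ⟨h1, h2⟩
        · apply hcl
          have hs0 : 0 ≤ s := le_trans (by linarith) h2.le
          have hsM : s ≤ max 0 t := by
            by_contra hcon
            push_neg at hcon
            have : M < s := by rw [hM]; exact max_lt h2 hcon
            linarith [hs.2]
          rcases le_total 0 t with h | h
          · rw [uIcc_of_le h]; exact ⟨hs0, by rwa [max_eq_right h] at hsM⟩
          · rw [uIcc_of_ge h]
            have hs0' : s ≤ 0 := by rwa [max_eq_left h] at hsM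
            exact ⟨le_trans h hs0, hs0'⟩
      · apply hcl
        have hs0' : s ≤ 0 := by linarith
        have hmin : min 0 t ≤ s := by
          by_contra hcon
          push_neg at hcon
          have : s < m := lt_min h1 hcon
          linarith [hs.1]
        rcases le_total 0 t with h | h
        · rw [uIcc_of_le h]
          exact ⟨by rwa [min_eq_left h] at hmin, le_trans hs0' h⟩
        · rw [uIcc_of_ge h]
          exact ⟨by rwa [min_eq_right h] at hmin, hs0'⟩
    refine ⟨u, hu, M - m, fun τ => γ (τ + m), by linarith, ?_, ?_, ?_⟩
    · intro τ hτ
      have hτm : τ + m ∈ Icc m M := ⟨by linarith [hτ.1], by linarith [hτ.2]⟩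
      refine ⟨hcl' _ hτm, ?_⟩
      have h := hshift m τ
      rwa [← hXY (hcl' _ hτm)] at h
    · have htm : t ∈ Icc m M :=
        ⟨le_trans (min_le_right _ _) (min_le_right 0 t), le_trans (le_max_right 0 t) (le_max_right _ _)⟩
      exact ⟨t - m, ⟨by linarith [htm.1], by linarith [htm.2]⟩, by simp⟩
    · have hu' : u = γ (s₂ - s₁) := by
        have h : σ s₂ = γ (s₂ + -s₁) := hEqσ hs₂
        rw [hσ₂] at h
        rw [sub_eq_add_neg]
        exact h
      refine ⟨s₂ - s₁ - m, ⟨?_, ?_⟩, ?_⟩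
      · have h := min_le_left (-s₁) (min 0 t)
        have := hs₂.1
        simp only [hm]
        linarith
      · have h := le_max_left (b - s₁) (max 0 t)
        have := hs₂.2
        simp only [hM]
        linarith
      · show γ (s₂ - s₁ - m + m) = u
        rw [sub_add_cancel, ← hu']
  have hcont : Continuous γ := continuous_iff_continuousAt.mpr fun t => (hγ t).continuousAt
  have h0C : γ 0 ∈ closure Ω := by rw [hγ0]; exact subset_closure (hSOm hx)
  have hΩC : Ω ⊆ closure Ω := subset_closure
  have key : ∀ t : ℝ, 0 ≤ t → (∀ s ∈ Icc 0 t, γ s ∈ closure Ω) → γ t ∈ Ω := by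
    intro t ht hC
    refine hSOm (hmem t ?_)
    rwa [uIcc_of_le ht]
  have fwd := stay_aux hcont isClosed_closure hΩ hΩC h0C key
  have keyb : ∀ t : ℝ, 0 ≤ t → (∀ s ∈ Icc 0 t, γ (-s) ∈ closure Ω) → γ (-t) ∈ Ω := by
    intro t ht hC
    refine hSOm (hmem (-t) ?_)
    intro s hs
    rw [uIcc_of_ge (neg_nonpos.mpr ht)] at hs
    have h := hC (-s) ⟨by linarith [hs.2], by linarith [hs.1]⟩
    simpa using h
  have bwd := stay_aux (γ := fun s => γ (-s)) (hcont.comp continuous_neg) isClosed_closure hΩ hΩC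
    (by simpa using h0C) keyb
  have hstay : ∀ t : ℝ, γ t ∈ closure Ω := by
    intro t
    rcases le_total 0 t with h | h
    · exact fwd t h t ⟨h, le_rfl⟩
    · have hb' := bwd (-t) (by linarith) (-t) ⟨by linarith, le_rfl⟩
      simpa using hb'
  refine ⟨γ, hγ0, fun t => ⟨hmem t (fun s _ => hstay s), ?_⟩⟩
  have h := hγ t
  rwa [← hXY (hstay t)] at h
end
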